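/- Let K be a field of characteristic zero, R = K[x,y,z], and let a, b, α be integers with a ≥ b−1, 1 ≤ α ≤ a−1 and 1 ≤ b−α ≤ 2. Let G = R/(x^a, y^b − x^α z^{b−α}, z^3) and set k = ⌊(a+b)/2⌋. Then h_G(k) = 3b−4 if a = b−1, h_G(k) = 3b−2 if a = b, h_G(k) = 3b−1 if a = b+1, and h_G(k) = 3b if a ≥ b+2. Moreover, if a ≥ b+4, then h_G(k) = h_G(k−1). -/

import Mathlib

open MvPolynomial

/-- The degree-`i` graded component of `R/I`, i.e. the image in `R/I` of the
space of homogeneous polynomials of degree `i`. -/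
noncomputable def grComponent (K : Type*) [Field K]
    (I : Ideal (MvPolynomial (Fin 3) K)) (i : ℕ) :
    Submodule K (MvPolynomial (Fin 3) K ⧸ I) :=
  (MvPolynomial.homogeneousSubmodule (Fin 3) K i).map
    (Ideal.Quotient.mkₐ K I).toLinearMap

/-- The Hilbert function of `R/I`. -/
noncomputable def hilb (K : Type*) [Field K]
    (I : Ideal (MvPolynomial (Fin 3) K)) (i : ℕ) : ℕ :=
  Module.finrank K (grComponent K I i)

/-- `R/I` has the weak Lefschetz property: there is a linear form `L` such that
for every `i`, multiplication by `L` from `[R/I]_i` to `[R/I]_{i+1}` is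
injective or surjective. -/
def hasWLP (K : Type*) [Field K] (I : Ideal (MvPolynomial (Fin 3) K)) : Prop :=
  ∃ L : MvPolynomial (Fin 3) K, L.IsHomogeneous 1 ∧
    ∀ i : ℕ,
      (∀ u ∈ grComponent K I i, ∀ v ∈ grComponent K I i,
          Ideal.Quotient.mk I L * u = Ideal.Quotient.mk I L * v → u = v) ∨
      (∀ w ∈ grComponent K I (i + 1), ∃ u ∈ grComponent K I i,
          Ideal.Quotient.mk I L * u = w)

namespace Stmt12Helper

/-- The index set of standard monomials of degree `k`. -/
def Sfin (a b k : ℕ) : Finset (ℕ × ℕ × ℕ) :=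
  ((Finset.range a) ×ˢ (Finset.range b) ×ˢ (Finset.range 3)).filter
    (fun t => t.1 + t.2.1 + t.2.2 = k)

theorem card_Sfin (a b k : ℕ) :
    (Sfin a b k).card = ∑ l ∈ Finset.range 3, (min b (k+1-l) - (k+1-a-l)) := by
  rw [Sfin, Finset.card_eq_sum_card_fiberwise (f := fun t => t.2.2) (t := Finset.range 3)
    (fun x hx => by simp only [Finset.coe_filter, Set.mem_setOf_eq, Finset.mem_coe, Finset.mem_filter, Finset.mem_product] at hx; exact hx.1.2.2)]
  refine Finset.sum_congr rfl fun l hl => ?_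
  rw [Finset.mem_range] at hl
  rw [← Nat.card_Ico]
  apply Finset.card_nbij' (i := fun t => t.2.1) (j := fun j => (k - l - j, j, l))
  · rintro ⟨i, j, l'⟩ ht
    simp only [Finset.mem_coe, Finset.mem_filter, Finset.mem_product, Finset.mem_range] at ht
    obtain ⟨⟨⟨h1, h2, h3⟩, h4⟩, h5⟩ := ht
    simp only [Finset.mem_coe, Finset.mem_Ico, lt_min_iff]
    refine ⟨?_, ?_, ?_⟩ <;> omega
  · intro j hj
    simp only [Finset.mem_coe, Finset.mem_Ico, lt_min_iff] at hj
    obtain ⟨h1, h2, h3⟩ := hj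
    simp only [Finset.mem_coe, Finset.mem_filter, Finset.mem_product, Finset.mem_range]
    refine ⟨⟨⟨?_, ?_, ?_⟩, ?_⟩, trivial⟩ <;> omega
  · rintro ⟨i, j, l'⟩ ht
    simp only [Finset.mem_coe, Finset.mem_filter, Finset.mem_product, Finset.mem_range] at ht
    obtain ⟨⟨⟨h1, h2, h3⟩, h4⟩, h5⟩ := ht
    simp only [Prod.mk.injEq]
    refine ⟨?_, trivial, ?_⟩ <;> omega
  · intro j hj; rfl

variable (K : Type*) [Field K] (a b α γ : ℕ)

noncomputable abbrev S0 : Type _ := AdjoinRoot ((Polynomial.X : Polynomial K) ^ a)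
noncomputable abbrev S1 : Type _ := AdjoinRoot ((Polynomial.X : Polynomial (S0 K a)) ^ 3)

noncomputable def celt : S1 K a :=
  (algebraMap (S0 K a) (S1 K a) (AdjoinRoot.root _)) ^ α * (AdjoinRoot.root _) ^ γ

noncomputable abbrev D : Type _ :=
  AdjoinRoot ((Polynomial.X : Polynomial (S1 K a)) ^ b - Polynomial.C (celt K a α γ))

noncomputable def xD : D K a b α γ :=
  algebraMap (S1 K a) (D K a b α γ) (algebraMap (S0 K a) (S1 K a) (AdjoinRoot.root _))

noncomputable def zD : D K a b α γ :=
  algebraMap (S1 K a) (D K a b α γ) (AdjoinRoot.root _)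

noncomputable def yD : D K a b α γ := AdjoinRoot.root _

lemma xD_pow_a : xD K a b α γ ^ a = 0 := by
  have h : (AdjoinRoot.root ((Polynomial.X : Polynomial K) ^ a)) ^ a = 0 := by
    rw [← AdjoinRoot.mk_X, ← map_pow, AdjoinRoot.mk_self]
  rw [xD, ← map_pow, ← map_pow, h, map_zero, map_zero]

lemma zD_pow_3 : zD K a b α γ ^ 3 = 0 := by
  have h : (AdjoinRoot.root ((Polynomial.X : Polynomial (S0 K a)) ^ 3)) ^ 3 = 0 := by
    rw [← AdjoinRoot.mk_X, ← map_pow, AdjoinRoot.mk_self]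
  rw [zD, ← map_pow, h, map_zero]

lemma yD_pow_b : yD K a b α γ ^ b = xD K a b α γ ^ α * zD K a b α γ ^ γ := by
  have h : AdjoinRoot.mk _ ((Polynomial.X : Polynomial (S1 K a)) ^ b - Polynomial.C (celt K a α γ)) = 0 :=
    AdjoinRoot.mk_self
  rw [map_sub, map_pow, AdjoinRoot.mk_X, AdjoinRoot.mk_C, sub_eq_zero] at h
  rw [yD, h, xD, zD, ← map_pow (algebraMap (S1 K a) (D K a b α γ)),
    ← map_pow (algebraMap (S1 K a) (D K a b α γ)), ← map_mul, AdjoinRoot.algebraMap_eq]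
  rfl

lemma monic_fb (hb : 0 < b) :
    ((Polynomial.X : Polynomial (S1 K a)) ^ b - Polynomial.C (celt K a α γ)).Monic :=
  Polynomial.monic_X_pow_sub (lt_of_le_of_lt Polynomial.degree_C_le (by exact_mod_cast hb))

lemma nontrivial_S0 (ha : 0 < a) : Nontrivial (S0 K a) :=
  nontrivial_of_ne _ _
    ((AdjoinRoot.powerBasis' (Polynomial.monic_X_pow a (R := K))).basis.ne_zero
      ⟨0, by simpa using ha⟩)

lemma nontrivial_S1 (ha : 0 < a) : Nontrivial (S1 K a) := by
  haveI := nontrivial_S0 K a ha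
  exact nontrivial_of_ne _ _
    ((AdjoinRoot.powerBasis' (Polynomial.monic_X_pow 3 (R := S0 K a))).basis.ne_zero
      ⟨0, by simp⟩)

noncomputable def bD (ha : 0 < a) (hb : 0 < b) :
    Module.Basis ((Fin a × Fin 3) × Fin b) K (D K a b α γ) := by
  haveI := nontrivial_S0 K a ha
  haveI := nontrivial_S1 K a ha
  exact
  (((AdjoinRoot.powerBasis' (Polynomial.monic_X_pow a (R := K))).basis.reindex
      (finCongr (by simp))).smulTower
    ((AdjoinRoot.powerBasis' (Polynomial.monic_X_pow 3 (R := S0 K a))).basis.reindex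
      (finCongr (by simp)))).smulTower
    ((AdjoinRoot.powerBasis' (monic_fb K a b α γ hb)).basis.reindex
      (finCongr Polynomial.natDegree_X_pow_sub_C))

lemma bD_apply (ha : 0 < a) (hb : 0 < b) (i : Fin a) (l : Fin 3) (j : Fin b) :
    bD K a b α γ ha hb ((i, l), j)
      = xD K a b α γ ^ (i : ℕ) * zD K a b α γ ^ (l : ℕ) * yD K a b α γ ^ (j : ℕ) := by
  simp only [bD, Module.Basis.smulTower_apply, Module.Basis.reindex_apply, finCongr_symm,
    finCongr_apply, PowerBasis.basis_eq_pow, AdjoinRoot.powerBasis'_gen, Fin.coe_cast,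
    Algebra.smul_def, map_mul, map_pow]
  rw [xD, zD, yD]
  rfl

/-- The algebra map to the model. -/
noncomputable def psi : MvPolynomial (Fin 3) K →ₐ[K] D K a b α γ :=
  MvPolynomial.aeval ![xD K a b α γ, yD K a b α γ, zD K a b α γ]

lemma psi_mono (i j l : ℕ) :
    psi K a b α γ (MvPolynomial.X 0 ^ i * MvPolynomial.X 1 ^ j * MvPolynomial.X 2 ^ l)
      = xD K a b α γ ^ i * yD K a b α γ ^ j * zD K a b α γ ^ l := by
  simp [psi, map_mul, map_pow]

/-- The ideal. -/
noncomputable def Ifull : Ideal (MvPolynomial (Fin 3) K) :=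
  Ideal.span {MvPolynomial.X 0 ^ a,
    MvPolynomial.X 1 ^ b - MvPolynomial.X 0 ^ α * MvPolynomial.X 2 ^ γ,
    MvPolynomial.X 2 ^ 3}

lemma psi_ker : ∀ p ∈ Ifull K a b α γ, psi K a b α γ p = 0 := by
  intro p hp
  have h : Ifull K a b α γ ≤ RingHom.ker (psi K a b α γ).toRingHom := by
    rw [Ifull, Ideal.span_le]
    rintro q hq
    simp only [Set.mem_insert_iff, Set.mem_singleton_iff] at hq
    have e0 : psi K a b α γ (MvPolynomial.X 0) = xD K a b α γ := by simp [psi]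
    have e1 : psi K a b α γ (MvPolynomial.X 1) = yD K a b α γ := by simp [psi]
    have e2 : psi K a b α γ (MvPolynomial.X 2) = zD K a b α γ := by simp [psi]
    rcases hq with rfl | rfl | rfl <;>
      simp only [SetLike.mem_coe, RingHom.mem_ker, AlgHom.toRingHom_eq_coe,
        RingHom.coe_coe, map_sub, map_mul, map_pow, e0, e1, e2]
    · exact xD_pow_a K a b α γ
    · rw [yD_pow_b K a b α γ, sub_self]
    · exact zD_pow_3 K a b α γ
  exact h hp

/-- The standard monomial family in the quotient. -/
noncomputable def v (k : ℕ) : {t // t ∈ Sfin a b k} → MvPolynomial (Fin 3) K ⧸ Ifull K a b α γ :=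
  fun t => Ideal.Quotient.mk _
    (MvPolynomial.X 0 ^ t.1.1 * MvPolynomial.X 1 ^ t.1.2.1 * MvPolynomial.X 2 ^ t.1.2.2)

lemma red (hγ : 0 < γ) (hb : α + γ = b) (k : ℕ) :
    ∀ j i l : ℕ, i + j + l = k →
      Ideal.Quotient.mk (Ifull K a b α γ)
          (MvPolynomial.X 0 ^ i * MvPolynomial.X 1 ^ j * MvPolynomial.X 2 ^ l)
        ∈ Submodule.span K (Set.range (v K a b α γ k)) := by
  have hg1 : (MvPolynomial.X 0 ^ a : MvPolynomial (Fin 3) K) ∈ Ifull K a b α γ :=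
    Ideal.subset_span (by simp)
  have hg2 : (MvPolynomial.X 1 ^ b - MvPolynomial.X 0 ^ α * MvPolynomial.X 2 ^ γ :
      MvPolynomial (Fin 3) K) ∈ Ifull K a b α γ :=
    Ideal.subset_span (by simp)
  have hg3 : (MvPolynomial.X 2 ^ 3 : MvPolynomial (Fin 3) K) ∈ Ifull K a b α γ :=
    Ideal.subset_span (by simp)
  intro j
  induction j using Nat.strong_induction_on with
  | _ j IH =>
    intro i l hsum
    by_cases hi : a ≤ i
    · obtain ⟨i', rfl⟩ : ∃ i', i = a + i' := ⟨i - a, by omega⟩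
      have heq : (MvPolynomial.X 0 ^ (a + i') * MvPolynomial.X 1 ^ j * MvPolynomial.X 2 ^ l :
          MvPolynomial (Fin 3) K)
          = (MvPolynomial.X 0 ^ i' * MvPolynomial.X 1 ^ j * MvPolynomial.X 2 ^ l) *
            MvPolynomial.X 0 ^ a := by
        ring
      rw [heq, Ideal.Quotient.eq_zero_iff_mem.mpr (Ideal.mul_mem_left _ _ hg1)]
      exact Submodule.zero_mem _
    · by_cases hl : 3 ≤ l
      · obtain ⟨l', rfl⟩ : ∃ l', l = 3 + l' := ⟨l - 3, by omega⟩
        have heq : (MvPolynomial.X 0 ^ i * MvPolynomial.X 1 ^ j * MvPolynomial.X 2 ^ (3 + l') :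
            MvPolynomial (Fin 3) K)
            = (MvPolynomial.X 0 ^ i * MvPolynomial.X 1 ^ j * MvPolynomial.X 2 ^ l') *
              MvPolynomial.X 2 ^ 3 := by
          ring
        rw [heq, Ideal.Quotient.eq_zero_iff_mem.mpr (Ideal.mul_mem_left _ _ hg3)]
        exact Submodule.zero_mem _
      · by_cases hj : b ≤ j
        · obtain ⟨j', rfl⟩ : ∃ j', j = b + j' := ⟨j - b, by omega⟩
          have hke : Ideal.Quotient.mk (Ifull K a b α γ)
              (MvPolynomial.X 0 ^ i * MvPolynomial.X 1 ^ (b + j') * MvPolynomial.X 2 ^ l)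
              = Ideal.Quotient.mk (Ifull K a b α γ)
              (MvPolynomial.X 0 ^ (i + α) * MvPolynomial.X 1 ^ j' *
                MvPolynomial.X 2 ^ (l + γ)) := by
            rw [Ideal.Quotient.mk_eq_mk_iff_sub_mem]
            have heq : (MvPolynomial.X 0 ^ i * MvPolynomial.X 1 ^ (b + j') * MvPolynomial.X 2 ^ l -
                MvPolynomial.X 0 ^ (i + α) * MvPolynomial.X 1 ^ j' *
                  MvPolynomial.X 2 ^ (l + γ) : MvPolynomial (Fin 3) K)
                = (MvPolynomial.X 0 ^ i * MvPolynomial.X 1 ^ j' * MvPolynomial.X 2 ^ l) *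
                  (MvPolynomial.X 1 ^ b - MvPolynomial.X 0 ^ α * MvPolynomial.X 2 ^ γ) := by
              ring
            rw [heq]
            exact Ideal.mul_mem_left _ _ hg2
          rw [hke]
          exact IH j' (by omega) (i + α) (l + γ) (by omega)
        · push_neg at hi hl hj
          exact Submodule.subset_span
            ⟨⟨(i, j, l), by
              simp only [Sfin, Finset.mem_filter, Finset.mem_product, Finset.mem_range]
              exact ⟨⟨hi, hj, hl⟩, hsum⟩⟩, rfl⟩

lemma mono_eq (d : Fin 3 →₀ ℕ) :
    (MvPolynomial.monomial d (1 : K)) =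
      MvPolynomial.X 0 ^ d 0 * MvPolynomial.X 1 ^ d 1 * MvPolynomial.X 2 ^ d 2 := by
  rw [MvPolynomial.monomial_eq, MvPolynomial.C_1, one_mul, Finsupp.prod,
    show ∏ i ∈ d.support, (MvPolynomial.X i ^ d i : MvPolynomial (Fin 3) K)
        = ∏ i : Fin 3, (MvPolynomial.X i ^ d i : MvPolynomial (Fin 3) K) from
      Finset.prod_subset (Finset.subset_univ _)
        (fun x _ hx => by rw [Finsupp.notMem_support_iff.mp hx, pow_zero]),
    Fin.prod_univ_three]

lemma grComponent_eq (hγ : 0 < γ) (hb : α + γ = b) (k : ℕ) :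
    grComponent K (Ifull K a b α γ) k = Submodule.span K (Set.range (v K a b α γ k)) := by
  apply le_antisymm
  · rintro x ⟨p, hp, rfl⟩
    rw [SetLike.mem_coe, MvPolynomial.mem_homogeneousSubmodule] at hp
    have hrw : (Ideal.Quotient.mkₐ K (Ifull K a b α γ)).toLinearMap p
        = ∑ d ∈ p.support, MvPolynomial.coeff d p •
            Ideal.Quotient.mk (Ifull K a b α γ) (MvPolynomial.monomial d 1) := by
      conv_lhs => rw [MvPolynomial.as_sum p]
      rw [map_sum]
      refine Finset.sum_congr rfl fun d hd => ?_
      rw [← Ideal.Quotient.mkₐ_eq_mk K, ← map_smul, MvPolynomial.smul_monomial,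
        smul_eq_mul, mul_one]
      rfl
    rw [hrw]
    refine Submodule.sum_mem _ fun d hd => Submodule.smul_mem _ _ ?_
    have hdeg : d 0 + d 1 + d 2 = k := by
      have h1 := hp (MvPolynomial.mem_support_iff.mp hd)
      change Finsupp.weight (fun _ => (1 : ℕ)) d = k at h1
      rw [← Finsupp.degree_eq_weight_one] at h1
      have h2 : Finsupp.degree d = ∑ i : Fin 3, d i :=
        Finset.sum_subset (Finset.subset_univ _)
          (fun x _ hx => Finsupp.notMem_support_iff.mp hx)
      rw [h2, Fin.sum_univ_three] at h1
      exact h1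
    rw [mono_eq]
    exact red K a b α γ hγ hb k (d 1) (d 0) (d 2) (by omega)
  · rw [Submodule.span_le]
    rintro _ ⟨⟨⟨i, j, l⟩, ht⟩, rfl⟩
    simp only [Sfin, Finset.mem_filter, Finset.mem_product, Finset.mem_range] at ht
    refine ⟨MvPolynomial.X 0 ^ i * MvPolynomial.X 1 ^ j * MvPolynomial.X 2 ^ l, ?_, rfl⟩
    rw [SetLike.mem_coe, MvPolynomial.mem_homogeneousSubmodule]
    have hh := (((MvPolynomial.isHomogeneous_X K (0 : Fin 3)).pow i).mul
      ((MvPolynomial.isHomogeneous_X K (1 : Fin 3)).pow j)).mul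
      ((MvPolynomial.isHomogeneous_X K (2 : Fin 3)).pow l)
    have hsum : i + j + l = k := ht.2
    simpa [hsum] using hh

lemma indep (ha : 0 < a) (hγ : 0 < γ) (hb : α + γ = b) (k : ℕ) :
    LinearIndependent K (v K a b α γ k) := by
  have hb0 : 0 < b := by omega
  set φ := Ideal.Quotient.liftₐ (Ifull K a b α γ) (psi K a b α γ) (psi_ker K a b α γ) with hφ
  refine LinearIndependent.of_comp φ.toLinearMap ?_
  have he : ∀ t : {t // t ∈ Sfin a b k}, t.1.1 < a ∧ t.1.2.1 < b ∧ t.1.2.2 < 3 := fun t => by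
    have h := t.2
    simp only [Sfin, Finset.mem_filter, Finset.mem_product, Finset.mem_range] at h
    exact ⟨h.1.1, h.1.2.1, h.1.2.2⟩
  have hcomp : (φ.toLinearMap ∘ v K a b α γ k) = fun t =>
      bD K a b α γ ha hb0 ((⟨t.1.1, (he t).1⟩, ⟨t.1.2.2, (he t).2.2⟩), ⟨t.1.2.1, (he t).2.1⟩) := by
    funext t
    simp only [Function.comp_apply, v, AlgHom.toLinearMap_apply, hφ]
    rw [Ideal.Quotient.liftₐ_apply]
    erw [Ideal.Quotient.lift_mk]
    rw [bD_apply]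
    simp only [AlgHom.toRingHom_eq_coe, RingHom.coe_coe, Fin.val_mk]
    rw [psi_mono]
    ring
  rw [hcomp]
  refine (bD K a b α γ ha hb0).linearIndependent.comp _ fun s t hst => ?_
  have h1 := congrArg (fun x => ((x.1.1 : Fin a) : ℕ)) hst
  have h2 := congrArg (fun x => ((x.1.2 : Fin 3) : ℕ)) hst
  have h3 := congrArg (fun x => ((x.2 : Fin b) : ℕ)) hst
  simp only at h1 h2 h3
  exact Subtype.ext (Prod.ext h1 (Prod.ext h3 h2))

theorem hilb_eq_card (ha : 0 < a) (hγ : 0 < γ) (hb : α + γ = b) (k : ℕ) :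
    hilb K (Ifull K a b α γ) k = (Sfin a b k).card := by
  rw [hilb, grComponent_eq K a b α γ hγ hb k,
    finrank_span_eq_card (indep K a b α γ ha hγ hb k)]
  exact Fintype.card_coe _

end Stmt12Helper

theorem stmt_12 (K : Type*) [Field K] [CharZero K] (a b α : ℕ)
    (hab : b ≤ a + 1) (hα1 : 1 ≤ α) (hα2 : α ≤ a - 1)
    (hγ1 : 1 ≤ b - α) (hγ2 : b - α ≤ 2) :
    let I : Ideal (MvPolynomial (Fin 3) K) := Ideal.span
      {(X 0 : MvPolynomial (Fin 3) K) ^ a, X 1 ^ b - X 0 ^ α * X 2 ^ (b - α), X 2 ^ 3}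
    let k : ℕ := (a + b) / 2
    ((a + 1 = b → hilb K I k = 3 * b - 4) ∧
     (a = b → hilb K I k = 3 * b - 2) ∧
     (a = b + 1 → hilb K I k = 3 * b - 1) ∧
     (b + 2 ≤ a → hilb K I k = 3 * b) ∧
     (b + 4 ≤ a → hilb K I k = hilb K I (k - 1))) := by
  intro I k
  have hIfull : I = Stmt12Helper.Ifull K a b α (b - α) := rfl
  have hk : k = (a + b) / 2 := rfl
  have h0 : 0 < a := by omega
  have hbb : α + (b - α) = b := by omega
  have hmain : ∀ k' : ℕ, hilb K I k'
      = (min b (k'+1) - (k'+1-a)) + ((min b (k'+1-1) - (k'+1-a-1))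
        + ((min b (k'+1-2) - (k'+1-a-2)) + 0)) := by
    intro k'
    rw [hIfull, Stmt12Helper.hilb_eq_card K a b α (b - α) h0 hγ1 hbb k',
      Stmt12Helper.card_Sfin, Finset.sum_range_succ, Finset.sum_range_succ,
      Finset.sum_range_succ, Finset.sum_range_zero]
    omega
  refine ⟨?_, ?_, ?_, ?_, ?_⟩ <;> intro h
  · rw [hmain]; omega
  · rw [hmain]; omega
  · rw [hmain]; omega
  · rw [hmain]; omega
  · rw [hmain, hmain]; omega
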